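/- arXiv:1903.00867 — 2 statements merged into one kernel-verified Lean document; each statement's English description precedes it below -/
import Mathlib

section
/- Let n ≥ 1 and let a, b > 0. Suppose ξ_1 > ξ_2 > … > ξ_n are real numbers that are positioned symmetrically around the origin, i.e. ξ_{n+1−j} = −ξ_j for all 1 ≤ j ≤ n, and such that, with p : ℂ → ℂ defined by p(ξ) = ∏_{j=1}^n (ξ − ξ_j), the difference equation A(ξ)·(p(ξ+i) − p(ξ)) + A(−ξ)·(p(ξ−i) − p(ξ)) = E_n · p(ξ) holds for every ξ ∈ ℂ, where A(ξ) = (ξ+ia)(ξ+ib) and E_n = −n(n+2a+2b−1). Then for every 1 ≤ j ≤ ⌊n/2⌋ one has ξ_j ≥ π(n+1−2j)/(2k₋), where k₋ = n + a^{−1} + b^{−1}. -/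
open Real Finset

lemma arctan_lipschitz : LipschitzWith 1 Real.arctan := by
  apply lipschitzWith_of_nnnorm_deriv_le Real.differentiable_arctan
  intro x
  rw [Real.deriv_arctan]
  rw [← NNReal.coe_le_coe, coe_nnnorm, Real.norm_eq_abs, NNReal.coe_one,
    abs_of_pos (by positivity), div_le_one (by positivity)]
  nlinarith [sq_nonneg x]

lemma arctan_pair_le {u v : ℝ} (h : 0 ≤ u + v) : Real.arctan u + Real.arctan v ≤ u + v := by
  have h1 : -u ≤ v := by linarith
  have h2 : Real.arctan (-u) ≤ Real.arctan v := Real.arctan_strictMono.monotone h1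
  have hd := arctan_lipschitz.dist_le_mul v (-u)
  rw [Real.dist_eq, Real.dist_eq, NNReal.coe_one, one_mul] at hd
  rw [abs_of_nonneg (by linarith), abs_of_nonneg (by linarith)] at hd
  rw [Real.arctan_neg] at h2 hd
  linarith

lemma arctan_le_self' {x : ℝ} (hx : 0 ≤ x) : Real.arctan x ≤ x := by
  have := arctan_pair_le (u := x) (v := 0) (by linarith)
  simpa using this

lemma factor_polar (s c : ℝ) (hc : 0 < c) :
    ∃ r : ℝ, 0 < r ∧ (s : ℂ) + Complex.I * c
      = (r : ℂ) * Complex.exp ((↑(π/2 - Real.arctan (s/c)) : ℂ) * Complex.I) := by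
  set t := Real.arctan (s/c) with ht
  have hcos : 0 < Real.cos t := Real.cos_arctan_pos _
  refine ⟨c / Real.cos t, div_pos hc hcos, ?_⟩
  rw [Complex.exp_mul_I]
  have h1 : (c / Real.cos t) * Real.sin t = s := by
    have : Real.tan t = s / c := Real.tan_arctan _
    rw [Real.tan_eq_sin_div_cos] at this
    field_simp at this ⊢
    linarith [this]
  have h2 : (c / Real.cos t) * Real.cos t = c := div_mul_cancel₀ _ hcos.ne'
  have hc1 : Real.cos (π/2 - t) = Real.sin t := Real.cos_pi_div_two_sub _
  have hs1 : Real.sin (π/2 - t) = Real.cos t := Real.sin_pi_div_two_sub _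
  rw [← Complex.ofReal_cos, ← Complex.ofReal_sin, hc1, hs1]
  rw [show ((c / Real.cos t : ℝ) : ℂ) * (↑(Real.sin t) + ↑(Real.cos t) * Complex.I)
      = (↑((c / Real.cos t) * Real.sin t) : ℂ) + ↑((c / Real.cos t) * Real.cos t) * Complex.I by
    push_cast; ring]
  rw [h1, h2]; ring

noncomputable def Ufun (n : ℕ) (a b : ℝ) (ξ : Fin n → ℝ) (x : ℝ) : ℝ :=
  Real.arctan (x/a) + Real.arctan (x/b) + ∑ j, Real.arctan (x - ξ j)

lemma hahn_key (n : ℕ) (a b : ℝ) (ha : 0 < a) (hb : 0 < b) (ξ : Fin n → ℝ) (x : ℝ)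
    (h0 : ((x:ℂ) + Complex.I*a) * ((x:ℂ) + Complex.I*b) * (∏ j, ((x:ℂ) + Complex.I - ξ j))
        + ((-x:ℂ) + Complex.I*a) * ((-x:ℂ) + Complex.I*b) * (∏ j, ((x:ℂ) - Complex.I - ξ j)) = 0) :
    ∃ m : ℤ, Ufun n a b ξ x = ((n:ℝ) + 1 - 2*m) * (π/2) := by
  unfold Ufun
  set W : ℂ := ((x:ℂ) + Complex.I*a) * ((x:ℂ) + Complex.I*b) * (∏ j, ((x:ℂ) + Complex.I - ξ j)) with hW
  have hconj : ((-x:ℂ) + Complex.I*a) * ((-x:ℂ) + Complex.I*b) * (∏ j, ((x:ℂ) - Complex.I - ξ j))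
      = (starRingEnd ℂ) W := by
    have hfac : ∀ j : Fin n, (starRingEnd ℂ) ((x:ℂ) + Complex.I - ξ j) = (x:ℂ) - Complex.I - ξ j := by
      intro j
      simp only [map_sub, map_add, Complex.conj_ofReal, Complex.conj_I]
      ring
    rw [hW, map_mul, map_mul, map_prod, Finset.prod_congr rfl fun j _ => hfac j]
    simp only [map_add, map_mul, Complex.conj_ofReal, Complex.conj_I]
    ring
  rw [hconj, Complex.add_conj] at h0
  have hre : W.re = 0 := by
    have := Complex.ofReal_eq_zero.mp h0
    linarith
  obtain ⟨r1, hr1, e1⟩ := factor_polar x a ha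
  obtain ⟨r2, hr2, e2⟩ := factor_polar x b hb
  choose r hr he using fun j => factor_polar (x - ξ j) 1 one_pos
  have hprod : (∏ j, ((x:ℂ) + Complex.I - ξ j))
      = (↑(∏ j, r j) : ℂ) * Complex.exp ((↑(∑ j, (π/2 - Real.arctan ((x - ξ j)/1))) : ℂ) * Complex.I) := by
    have step : ∀ j : Fin n, ((x:ℂ) + Complex.I - ξ j)
        = (↑(r j) : ℂ) * Complex.exp ((↑(π/2 - Real.arctan ((x - ξ j)/1)) : ℂ) * Complex.I) := by
      intro j
      rw [← he j]
      push_cast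
      ring
    rw [Finset.prod_congr rfl (fun j _ => step j), Finset.prod_mul_distrib,
      ← Complex.exp_sum]
    push_cast
    rw [← Finset.sum_mul]
  set θ1 : ℝ := π/2 - Real.arctan (x/a)
  set θ2 : ℝ := π/2 - Real.arctan (x/b)
  set θ3 : ℝ := ∑ j, (π/2 - Real.arctan ((x - ξ j)/1))
  set R : ℝ := r1 * r2 * ∏ j, r j with hR
  have hWpolar : W = (R : ℂ) * Complex.exp ((↑(θ1 + θ2 + θ3) : ℂ) * Complex.I) := by
    rw [hW, e1, e2, hprod, hR, Complex.ofReal_add, Complex.ofReal_add, add_mul, add_mul,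
      Complex.exp_add, Complex.exp_add]
    push_cast
    ring
  have hRpos : 0 < R := by
    apply mul_pos (mul_pos hr1 hr2)
    exact Finset.prod_pos (fun j _ => hr j)
  have hcos : Real.cos (θ1 + θ2 + θ3) = 0 := by
    have : W.re = R * Real.cos (θ1 + θ2 + θ3) := by
      rw [hWpolar, Complex.re_ofReal_mul, Complex.exp_ofReal_mul_I_re]
    rw [this] at hre
    exact (mul_eq_zero.mp hre).resolve_left hRpos.ne'
  obtain ⟨k, hk⟩ := Real.cos_eq_zero_iff.mp hcos
  refine ⟨k, ?_⟩
  have hθ3 : θ3 = n * (π/2) - ∑ j, Real.arctan (x - ξ j) := by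
    simp only [θ3, div_one, Finset.sum_sub_distrib, Finset.sum_const, Finset.card_univ,
      Fintype.card_fin, nsmul_eq_mul]
  rw [hθ3] at hk
  simp only [θ1, θ2] at hk
  have hπ : (0:ℝ) < π := Real.pi_pos
  nlinarith [hk]

lemma Ufun_strictMono (n : ℕ) (a b : ℝ) (ha : 0 < a) (hb : 0 < b) (ξ : Fin n → ℝ) :
    StrictMono (Ufun n a b ξ) := by
  intro x y hxy
  unfold Ufun
  have h1 : Real.arctan (x/a) < Real.arctan (y/a) :=
    Real.arctan_strictMono (by gcongr)
  have h2 : Real.arctan (x/b) < Real.arctan (y/b) :=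
    Real.arctan_strictMono (by gcongr)
  have h3 : ∑ j, Real.arctan (x - ξ j) ≤ ∑ j, Real.arctan (y - ξ j) :=
    Finset.sum_le_sum fun j _ => Real.arctan_strictMono.monotone (by linarith)
  linarith

lemma sum_rev_eq (n : ℕ) (ξ : Fin n → ℝ) (f : ℝ → ℝ) :
    ∑ j : Fin n, f (ξ j) = ∑ j : Fin n, f (ξ (Fin.rev j)) :=
  Fintype.sum_equiv Fin.revPerm (fun j : Fin n => f (ξ j)) (fun j : Fin n => f (ξ (Fin.rev j)))
    (fun j => by simp)

lemma Ufun_zero (n : ℕ) (a b : ℝ) (ξ : Fin n → ℝ)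
    (hsym : ∀ j : Fin n, ξ j.rev = -ξ j) : Ufun n a b ξ 0 = 0 := by
  unfold Ufun
  have hS : ∑ j, Real.arctan (0 - ξ j) = 0 := by
    have h1 : ∑ j : Fin n, Real.arctan (0 - ξ j) = ∑ j : Fin n, Real.arctan (0 - ξ (Fin.rev j)) :=
      sum_rev_eq n ξ (fun t => Real.arctan (0 - t))
    have h2 : ∑ j : Fin n, Real.arctan (0 - ξ (Fin.rev j)) = -∑ j : Fin n, Real.arctan (0 - ξ j) := by
      rw [← Finset.sum_neg_distrib]
      apply Finset.sum_congr rfl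
      intro j _
      rw [hsym j]
      rw [show (0 : ℝ) - -ξ j = -(0 - ξ j) by ring, Real.arctan_neg]
    have := h1.trans h2
    linarith
  simp only [zero_div, Real.arctan_zero, zero_add, add_zero]
  exact hS

lemma Ufun_le (n : ℕ) (a b : ℝ) (ha : 0 < a) (hb : 0 < b) (ξ : Fin n → ℝ)
    (hsym : ∀ j : Fin n, ξ j.rev = -ξ j) {x : ℝ} (hx : 0 ≤ x) :
    Ufun n a b ξ x ≤ ((n:ℝ) + a⁻¹ + b⁻¹) * x := by
  unfold Ufun
  have h1 : Real.arctan (x/a) ≤ x/a := arctan_le_self' (by positivity)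
  have h2 : Real.arctan (x/b) ≤ x/b := arctan_le_self' (by positivity)
  have hrev : ∑ j, Real.arctan (x + ξ j) = ∑ j, Real.arctan (x - ξ j) := by
    have h3 : ∑ j : Fin n, Real.arctan (x - ξ j) = ∑ j : Fin n, Real.arctan (x - ξ (Fin.rev j)) :=
      sum_rev_eq n ξ (fun t => Real.arctan (x - t))
    rw [h3]
    apply Finset.sum_congr rfl
    intro j _
    rw [hsym j]
    ring_nf
  have hpair : ∀ j : Fin n, Real.arctan (x - ξ j) + Real.arctan (x + ξ j) ≤ 2*x := by
    intro j
    have := arctan_pair_le (u := x - ξ j) (v := x + ξ j) (by linarith)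
    linarith
  have hsum : ∑ j, Real.arctan (x - ξ j) + ∑ j, Real.arctan (x + ξ j) ≤ (n:ℝ) * (2*x) := by
    rw [← Finset.sum_add_distrib]
    calc ∑ j, (Real.arctan (x - ξ j) + Real.arctan (x + ξ j)) ≤ ∑ _j : Fin n, 2*x :=
          Finset.sum_le_sum fun j _ => hpair j
      _ = (n:ℝ) * (2*x) := by simp [mul_comm]
  rw [hrev] at hsum
  have hS : ∑ j, Real.arctan (x - ξ j) ≤ (n:ℝ) * x := by linarith
  have hxa : x/a = a⁻¹ * x := by rw [div_eq_inv_mul]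
  have hxb : x/b = b⁻¹ * x := by rw [div_eq_inv_mul]
  rw [hxa] at h1
  rw [hxb] at h2
  have hexp : ((n:ℝ) + a⁻¹ + b⁻¹) * x = (n:ℝ)*x + a⁻¹*x + b⁻¹*x := by ring
  rw [hexp, hxa, hxb]
  linarith [h1, h2, hS]

/-- Lower bounds for the positive zeros of the symmetric continuous Hahn polynomial,
whose zeros are positioned symmetrically around the origin. -/
theorem continuous_hahn_positive_zero_bounds
    (n : ℕ) (hn : 1 ≤ n) (a b : ℝ) (ha : 0 < a) (hb : 0 < b)
    (ξ : Fin n → ℝ)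
    (hdec : ∀ j j' : Fin n, j < j' → ξ j' < ξ j)
    (hsym : ∀ j : Fin n, ξ j.rev = -ξ j)
    (p : ℂ → ℂ)
    (hp : ∀ z : ℂ, p z = ∏ j : Fin n, (z - (ξ j : ℂ)))
    (A : ℂ → ℂ)
    (hA : ∀ z : ℂ, A z = (z + Complex.I * (a : ℂ)) * (z + Complex.I * (b : ℂ)))
    (En : ℝ)
    (hEn : En = -(n : ℝ) * ((n : ℝ) + 2 * a + 2 * b - 1))
    (heq : ∀ z : ℂ,
      A z * (p (z + Complex.I) - p z) + A (-z) * (p (z - Complex.I) - p z)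
        = (En : ℂ) * p z)
    (km : ℝ)
    (hkm : km = (n : ℝ) + a⁻¹ + b⁻¹) :
    ∀ j : Fin n, j.val + 1 ≤ n / 2 →
      π * ((n : ℝ) - 1 - 2 * j.val) / (2 * km) ≤ ξ j := by
  have hπ : (0:ℝ) < π := Real.pi_pos
  have hkm0 : 0 < km := by
    rw [hkm]
    have : (0:ℝ) ≤ (n:ℝ) := Nat.cast_nonneg n
    positivity
  -- quantization at each zero
  have hz : ∀ k : Fin n, ∃ m : ℤ, Ufun n a b ξ (ξ k) = ((n:ℝ) + 1 - 2*m) * (π/2) := by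
    intro k
    apply hahn_key n a b ha hb ξ (ξ k)
    have hpz : p ((ξ k : ℝ) : ℂ) = 0 := by
      rw [hp]
      exact Finset.prod_eq_zero (Finset.mem_univ k) (by simp)
    have h := heq ((ξ k : ℝ) : ℂ)
    rw [hpz, hA, hA, hp, hp] at h
    simp only [sub_zero, mul_zero] at h
    exact h
  have hmono := Ufun_strictMono n a b ha hb ξ
  have hU0 := Ufun_zero n a b ξ hsym
  set m0 : ℕ := (n-1)/2 with hm0def
  have hm0 : m0 < n := by omega
  set mid : Fin n := ⟨m0, hm0⟩ with hmiddef
  have hmid : ((n:ℝ) - 1 - 2*m0) * (π/2) ≤ Ufun n a b ξ (ξ mid) := by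
    rcases Nat.even_or_odd n with he | ho
    · -- n even
      obtain ⟨t, ht⟩ := he
      have hrevval : (Fin.rev mid).val = m0 + 1 := by
        rw [Fin.val_rev]
        show n - (m0 + 1) = m0 + 1
        omega
      have hlt : mid < Fin.rev mid := by
        rw [Fin.lt_def, hrevval]
        exact Nat.lt_succ_self m0
      have h1 : ξ (Fin.rev mid) < ξ mid := hdec _ _ hlt
      rw [hsym] at h1
      have hpos : 0 < ξ mid := by linarith
      have h2 : 0 < Ufun n a b ξ (ξ mid) := by
        have := hmono hpos
        rw [hU0] at this
        exact this
      obtain ⟨m, hm⟩ := hz mid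
      have h3 : (0:ℝ) < ((n:ℝ) + 1 - 2*m) := by
        rcases lt_trichotomy (0:ℝ) ((n:ℝ) + 1 - 2*m) with h | h | h
        · exact h
        · rw [hm, ← h] at h2; simp at h2
        · exfalso; rw [hm] at h2; nlinarith
      have h4 : (1:ℤ) ≤ (n:ℤ) + 1 - 2*m := by
        have : (0:ℤ) < (n:ℤ) + 1 - 2*m := by exact_mod_cast h3
        omega
      have h5 : ((n:ℝ) - 1 - 2*m0) = 1 := by
        have : (n:ℤ) - 1 - 2*(m0:ℤ) = 1 := by
          simp only [hm0def]
          omega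
        exact_mod_cast this
      rw [hm, h5]
      have h6 : (1:ℝ) ≤ (n:ℝ) + 1 - 2*m := by exact_mod_cast h4
      nlinarith
    · -- n odd
      have hrevmid : Fin.rev mid = mid := by
        apply Fin.ext
        rw [Fin.val_rev]
        show n - (m0 + 1) = m0
        obtain ⟨t, ht⟩ := ho
        omega
      have h1 : ξ mid = -ξ mid := by
        have := hsym mid
        rwa [hrevmid] at this
      have h2 : ξ mid = 0 := by linarith
      have h3 : ((n:ℝ) - 1 - 2*m0) = 0 := by
        obtain ⟨t, ht⟩ := ho
        have : (n:ℤ) - 1 - 2*(m0:ℤ) = 0 := by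
          simp only [hm0def]
          omega
        exact_mod_cast this
      rw [h2, hU0, h3]
      simp
  -- descent step
  have hstep : ∀ k k' : Fin n, k.val + 1 = k'.val →
      ((n:ℝ) - 1 - 2*k'.val) * (π/2) ≤ Ufun n a b ξ (ξ k') →
      ((n:ℝ) - 1 - 2*k.val) * (π/2) ≤ Ufun n a b ξ (ξ k) := by
    intro k k' hkk hk'
    have hlt : ξ k' < ξ k := hdec k k' (by rw [Fin.lt_def]; omega)
    have hU : Ufun n a b ξ (ξ k') < Ufun n a b ξ (ξ k) := hmono hlt
    obtain ⟨m, hm⟩ := hz k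
    have hc : ((k'.val : ℝ)) = (k.val : ℝ) + 1 := by exact_mod_cast hkk.symm
    have h1 : ((n:ℝ) - 3 - 2*k.val) * (π/2) < ((n:ℝ) + 1 - 2*m) * (π/2) := by
      rw [← hm]
      calc ((n:ℝ) - 3 - 2*k.val) * (π/2) = ((n:ℝ) - 1 - 2*k'.val) * (π/2) := by
            rw [hc]; ring
        _ ≤ Ufun n a b ξ (ξ k') := hk'
        _ < Ufun n a b ξ (ξ k) := hU
    have h2 : ((n:ℝ) - 3 - 2*k.val) < ((n:ℝ) + 1 - 2*m) :=
      (mul_lt_mul_iff_of_pos_right (by positivity : (0:ℝ) < π/2)).mp h1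
    have h3 : (n:ℤ) - 3 - 2*(k.val:ℤ) < (n:ℤ) + 1 - 2*m := by exact_mod_cast h2
    have h4 : (n:ℤ) - 1 - 2*(k.val:ℤ) ≤ (n:ℤ) + 1 - 2*m := by omega
    have h5 : ((n:ℝ) - 1 - 2*k.val) ≤ ((n:ℝ) + 1 - 2*m) := by exact_mod_cast h4
    rw [hm]
    nlinarith
  -- chain
  have hchain : ∀ d : ℕ, ∀ k : Fin n, k.val + d = m0 →
      ((n:ℝ) - 1 - 2*k.val) * (π/2) ≤ Ufun n a b ξ (ξ k) := by
    intro d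
    induction d with
    | zero =>
      intro k hk
      have hkm' : k = mid := Fin.ext (show k.val = m0 by omega)
      rw [hkm']
      exact hmid
    | succ d ih =>
      intro k hk
      have hk1 : k.val + 1 < n := by omega
      exact hstep k ⟨k.val + 1, hk1⟩ rfl (ih ⟨k.val + 1, hk1⟩ (show k.val + 1 + d = m0 by omega))
  -- conclude
  intro j hj
  have hjm : j.val ≤ m0 := by omega
  have hUj := hchain (m0 - j.val) j (by omega)
  have hposj : 0 < ξ j := by
    have hlt : j < Fin.rev j := by
      rw [Fin.lt_def, Fin.val_rev]
      omega
    have := hdec _ _ hlt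
    rw [hsym] at this
    linarith
  have hub := Ufun_le n a b ha hb ξ hsym hposj.le
  rw [← hkm] at hub
  have hfin : ((n:ℝ) - 1 - 2*j.val) * (π/2) ≤ km * ξ j := hUj.trans hub
  rw [div_le_iff₀ (by positivity)]
  calc π * ((n:ℝ) - 1 - 2*j.val) = 2 * (((n:ℝ) - 1 - 2*j.val) * (π/2)) := by ring
    _ ≤ 2 * (km * ξ j) := by linarith
    _ = ξ j * (2 * km) := by ring
end

section
/- For a > 0 define v_a : ℝ → ℝ by v_a(x) = 2·arctan(x/a). Let n ≥ 1, let K ≥ 3 and L ≥ 1 be natural numbers, and let a_1,…,a_K > 0 and b_1,…,b_L > 0. Then there exists a unique ξ = (ξ_1,…,ξ_n) ∈ ℝ^n satisfying, for every j ∈ {1,…,n}, the system Σ_{k=1}^K v_{a_k}(ξ_j) + Σ_{j′≠j} Σ_{l=1}^L ( v_{b_l}(ξ_{j′} + ξ_j) − v_{b_l}(ξ_{j′} − ξ_j) ) = 2π(n+1−j). Moreover this solution satisfies ξ_j ≥ π(n+1−j)/κ₋ for all 1 ≤ j ≤ n, and ξ_j − ξ_{j′} ≥ π(j′−j)/κ₋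 for all 1 ≤ j < j′ ≤ n, where κ₋ = Σ_{k=1}^K a_k^{−1} + 2(n−1) Σ_{l=1}^L b_l^{−1}. -/
open Real Finset

/-- The rational function `v_a(x) = 2 arctan(x/a)`. -/
noncomputable def vRat (a x : ℝ) : ℝ := 2 * Real.arctan (x / a)

lemma vRat_zero (a : ℝ) : vRat a 0 = 0 := by simp [vRat]

lemma vRat_neg (a x : ℝ) : vRat a (-x) = - vRat a x := by
  simp [vRat, neg_div, Real.arctan_neg, mul_neg]

lemma arctan_sub_le {x y : ℝ} (h : y ≤ x) : arctan x - arctan y ≤ x - y := by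
  rcases eq_or_lt_of_le h with rfl | h
  · simp
  · obtain ⟨c, _, hc⟩ := exists_hasDerivAt_eq_slope arctan (fun t => 1/(1+t^2)) h
      (Real.continuous_arctan.continuousOn) (fun t _ => Real.hasDerivAt_arctan t)
    have h1 : (arctan x - arctan y) / (x - y) ≤ 1 := by
      rw [← hc]
      rw [div_le_one (by positivity)]
      nlinarith [sq_nonneg c]
    have h2 : 0 < x - y := by linarith
    calc arctan x - arctan y = (arctan x - arctan y) / (x - y) * (x - y) := by field_simp
    _ ≤ 1 * (x - y) := by apply mul_le_mul_of_nonneg_right h1 h2.le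
    _ = x - y := by ring

lemma arctan_le_self {x : ℝ} (h : 0 ≤ x) : arctan x ≤ x := by
  have := arctan_sub_le h
  simpa using this

lemma vRat_mono {a : ℝ} (ha : 0 < a) {x y : ℝ} (h : y ≤ x) : vRat a y ≤ vRat a x := by
  have : arctan (y / a) ≤ arctan (x / a) :=
    Real.arctan_strictMono.monotone (by gcongr)
  unfold vRat; linarith

lemma vRat_lip {a : ℝ} (ha : 0 < a) {x y : ℝ} (h : y ≤ x) :
    vRat a x - vRat a y ≤ 2 / a * (x - y) := by
  have h1 : arctan (x/a) - arctan (y/a) ≤ x/a - y/a :=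
    arctan_sub_le (by gcongr)
  unfold vRat
  have : x/a - y/a = (x-y)/a := by ring
  rw [this] at h1
  have := mul_le_mul_of_nonneg_left h1 (by norm_num : (0:ℝ) ≤ 2)
  calc 2 * arctan (x/a) - 2 * arctan (y/a) = 2 * (arctan (x/a) - arctan (y/a)) := by ring
  _ ≤ 2 * ((x-y)/a) := this
  _ = 2 / a * (x - y) := by ring

lemma vRat_mul_nonneg {a : ℝ} (ha : 0 < a) (s t : ℝ) :
    0 ≤ (vRat a s - vRat a t) * (s - t) := by
  rcases le_total t s with h | h
  · exact mul_nonneg (by linarith [vRat_mono ha h]) (by linarith)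
  · have h1 : vRat a s - vRat a t ≤ 0 := by linarith [vRat_mono ha h]
    have h2 : s - t ≤ 0 := by linarith
    nlinarith

lemma vRat_mul_pos {a : ℝ} (ha : 0 < a) {s t : ℝ} (h : s ≠ t) :
    0 < (vRat a s - vRat a t) * (s - t) := by
  rcases lt_or_gt_of_ne h with h | h
  · have : arctan (s/a) < arctan (t/a) :=
      Real.arctan_strictMono (by apply div_lt_div_of_pos_right h ha)
    have hv : vRat a s < vRat a t := by unfold vRat; linarith
    exact mul_pos_of_neg_of_neg (by linarith) (by linarith)
  · have : arctan (t/a) < arctan (s/a) :=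
      Real.arctan_strictMono (by apply div_lt_div_of_pos_right h ha)
    have hv : vRat a t < vRat a s := by unfold vRat; linarith
    exact mul_pos (by linarith) (by linarith)

noncomputable def Wfun (a x : ℝ) : ℝ :=
  2 * x * Real.arctan (x / a) - a * Real.log (1 + (x / a) ^ 2)

lemma Wfun_even (a x : ℝ) : Wfun a (-x) = Wfun a x := by
  simp [Wfun, neg_div, Real.arctan_neg]

lemma hasDerivAt_Wfun {a : ℝ} (ha : 0 < a) (x : ℝ) :
    HasDerivAt (Wfun a) (vRat a x) x := by
  have h1 : HasDerivAt (fun y : ℝ => y / a) (1 / a) x := by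
    simpa using (hasDerivAt_id x).div_const a
  have h2 : HasDerivAt (fun y : ℝ => arctan (y / a)) (1 / (1 + (x/a)^2) * (1/a)) x :=
    by have := (Real.hasDerivAt_arctan (x/a)).comp x h1; exact this
  have h3 : HasDerivAt (fun y : ℝ => 2 * y * arctan (y / a))
      (2 * arctan (x/a) + 2 * x * (1 / (1 + (x/a)^2) * (1/a))) x := by
    have := ((hasDerivAt_id x).const_mul (2:ℝ)).fun_mul h2
    simp only [id_eq] at this
    refine this.congr_deriv ?_
    ring
  have h4 : HasDerivAt (fun y : ℝ => 1 + (y / a) ^ 2) (2 * (x/a) ^ 1 * (1/a)) x := by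
    exact (h1.pow 2).const_add 1
  have h5 : HasDerivAt (fun y : ℝ => a * Real.log (1 + (y / a) ^ 2))
      (a * ((2 * (x/a) ^ 1 * (1/a)) / (1 + (x/a)^2))) x := by
    exact (h4.log (by positivity)).const_mul a
  have h6 := h3.fun_sub h5
  refine h6.congr_deriv ?_
  unfold vRat
  have hne : (1 + (x/a)^2) ≠ 0 := by positivity
  field_simp
  ring

lemma continuous_Wfun {a : ℝ} (ha : 0 < a) : Continuous (Wfun a) := by
  unfold Wfun
  have h1 : Continuous fun x : ℝ => 1 + (x / a) ^ 2 := by continuity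
  have h2 : Continuous fun x : ℝ => Real.log (1 + (x / a) ^ 2) :=
    h1.log (fun x => by positivity)
  continuity

lemma Wfun_lb {a c x : ℝ} (ha : 0 < a) (hc : 1 ≤ c) :
    (π - 2 / c) * |x| - (2 * a + 2 * a / c + 2 * a * Real.log c) ≤ Wfun a x := by
  have hc0 : 0 < c := by linarith
  -- part 1 : π|x| - 2a ≤ 2 x arctan(x/a)
  have habs : 2 * x * arctan (x / a) = 2 * |x| * arctan (|x| / a) := by
    rcases abs_cases x with ⟨h, _⟩ | ⟨h, _⟩
    · rw [h]
    · rw [h]; rw [neg_div, Real.arctan_neg]; ring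
  have part1 : π * |x| - 2 * a ≤ 2 * x * arctan (x / a) := by
    rw [habs]
    rcases eq_or_lt_of_le (abs_nonneg x) with h0 | h0
    · rw [← h0]
      simp
      positivity
    · have ht : 0 < |x| / a := by positivity
      have harc : π / 2 - a / |x| ≤ arctan (|x| / a) := by
        have hinv := Real.arctan_inv_of_pos ht
        have : (|x| / a)⁻¹ = a / |x| := by rw [inv_div]
        rw [this] at hinv
        have hle : arctan (a / |x|) ≤ a / |x| := arctan_le_self (by positivity)
        linarith
      calc π * |x| - 2 * a = 2 * |x| * (π / 2 - a / |x|) := by field_simp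
      _ ≤ 2 * |x| * arctan (|x| / a) :=
          mul_le_mul_of_nonneg_left harc (by positivity)
  -- part 2 : a log(1+(x/a)^2) ≤ 2a/c + 2|x|/c + 2a log c
  have part2 : a * Real.log (1 + (x / a) ^ 2) ≤ 2 * a / c + 2 / c * |x| + 2 * a * Real.log c := by
    set s := Real.sqrt (1 + (x / a) ^ 2) with hs
    have hsp : 0 < s := Real.sqrt_pos.mpr (by positivity)
    have hssq : s ^ 2 = 1 + (x / a) ^ 2 := Real.sq_sqrt (by positivity)
    have hlog : Real.log (1 + (x / a) ^ 2) = 2 * Real.log s := by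
      rw [← hssq, Real.log_pow]; push_cast; ring
    have hsle : s ≤ 1 + |x| / a := by
      rw [hs]
      have : 1 + (x / a) ^ 2 ≤ (1 + |x| / a) ^ 2 := by
        have : (x / a) ^ 2 = (|x| / a) ^ 2 := by
          rw [div_pow, div_pow, sq_abs]
        rw [this]
        nlinarith [div_nonneg (abs_nonneg x) ha.le]
      calc Real.sqrt (1 + (x / a) ^ 2) ≤ Real.sqrt ((1 + |x| / a) ^ 2) := Real.sqrt_le_sqrt this
      _ = 1 + |x| / a := Real.sqrt_sq (by positivity)
    have hls : Real.log s ≤ s / c + Real.log c := by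
      have h1 : Real.log (s / c) ≤ s / c - 1 := Real.log_le_sub_one_of_pos (by positivity)
      have h2 : Real.log (s / c) = Real.log s - Real.log c :=
        Real.log_div (ne_of_gt hsp) (ne_of_gt hc0)
      linarith
    rw [hlog]
    have : a * (2 * Real.log s) ≤ 2 * a * (s / c + Real.log c) := by
      nlinarith [hls, ha]
    calc a * (2 * Real.log s) ≤ 2 * a * (s / c + Real.log c) := this
    _ ≤ 2 * a * ((1 + |x| / a) / c + Real.log c) := by
        apply mul_le_mul_of_nonneg_left _ (by positivity)
        have : s / c ≤ (1 + |x| / a) / c := by gcongr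
        linarith
    _ = 2 * a / c + 2 / c * |x| + 2 * a * Real.log c := by field_simp
  unfold Wfun
  have hdiv : 2 / c * |x| ≤ 2 * |x| := by
    apply mul_le_mul_of_nonneg_right _ (abs_nonneg x)
    rw [div_le_iff₀ hc0]; nlinarith
  nlinarith [part1, part2]

noncomputable def Vfun (n K L : ℕ) (a : Fin K → ℝ) (b : Fin L → ℝ) (ξ : Fin n → ℝ) : ℝ :=
  (∑ j, ((∑ k, Wfun (a k) (ξ j)) - 2 * π * ((n:ℝ) - j.val) * ξ j)) +
  (1/2) * ∑ j, ∑ q ∈ Finset.univ.erase j, ∑ l,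
    (Wfun (b l) (ξ q + ξ j) + Wfun (b l) (ξ q - ξ j))

lemma Vfun_update (n K L : ℕ) (a : Fin K → ℝ) (b : Fin L → ℝ)
    (ξ : Fin n → ℝ) (j : Fin n) (t : ℝ) :
    Vfun n K L a b (Function.update ξ j t) =
      ((∑ p ∈ Finset.univ.erase j, ((∑ k, Wfun (a k) (ξ p)) - 2 * π * ((n:ℝ) - p.val) * ξ p))
        + (1/2) * ∑ p ∈ Finset.univ.erase j, ∑ q ∈ (Finset.univ.erase j).erase p, ∑ l,
            (Wfun (b l) (ξ q + ξ p) + Wfun (b l) (ξ q - ξ p)))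
      + ((∑ k, Wfun (a k) t) - 2 * π * ((n:ℝ) - j.val) * t
        + ∑ q ∈ Finset.univ.erase j, ∑ l, (Wfun (b l) (ξ q + t) + Wfun (b l) (ξ q - t))) := by
  classical
  set u := Function.update ξ j t with hu
  have huj : u j = t := Function.update_self j t ξ
  have hup : ∀ p : Fin n, p ≠ j → u p = ξ p := fun p hp => Function.update_of_ne hp t ξ
  have h1 : ∑ p, ((∑ k, Wfun (a k) (u p)) - 2*π*((n:ℝ)-p.val) * u p)
      = ((∑ k, Wfun (a k) t) - 2*π*((n:ℝ)-j.val)*t)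
        + ∑ p ∈ Finset.univ.erase j, ((∑ k, Wfun (a k) (ξ p)) - 2*π*((n:ℝ)-p.val) * ξ p) := by
    rw [← Finset.add_sum_erase Finset.univ _ (Finset.mem_univ j), huj]
    congr 1
    apply Finset.sum_congr rfl
    intro p hp
    rw [hup p (Finset.mem_erase.mp hp).1]
  have h2 : ∀ p ∈ Finset.univ.erase j,
      (∑ q ∈ Finset.univ.erase p, ∑ l, (Wfun (b l) (u q + u p) + Wfun (b l) (u q - u p)))
      = (∑ l, (Wfun (b l) (ξ p + t) + Wfun (b l) (ξ p - t)))
        + ∑ q ∈ (Finset.univ.erase j).erase p, ∑ l,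
            (Wfun (b l) (ξ q + ξ p) + Wfun (b l) (ξ q - ξ p)) := by
    intro p hp
    have hpj : p ≠ j := (Finset.mem_erase.mp hp).1
    have hjmem : j ∈ Finset.univ.erase p :=
      Finset.mem_erase.mpr ⟨Ne.symm hpj, Finset.mem_univ j⟩
    rw [← Finset.add_sum_erase _ _ hjmem]
    congr 1
    · rw [huj, hup p hpj]
      apply Finset.sum_congr rfl
      intro l _
      have e1 : t + ξ p = ξ p + t := add_comm _ _
      have e2 : Wfun (b l) (t - ξ p) = Wfun (b l) (ξ p - t) := by
        rw [show t - ξ p = -(ξ p - t) by ring, Wfun_even]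
      rw [e1, e2]
    · rw [Finset.erase_right_comm]
      apply Finset.sum_congr rfl
      intro q hq
      rw [hup q (Finset.mem_erase.mp (Finset.mem_erase.mp hq).2).1, hup p hpj]
  have h3 : ∑ p, ∑ q ∈ Finset.univ.erase p, ∑ l,
        (Wfun (b l) (u q + u p) + Wfun (b l) (u q - u p))
      = 2 * (∑ q ∈ Finset.univ.erase j, ∑ l, (Wfun (b l) (ξ q + t) + Wfun (b l) (ξ q - t)))
        + ∑ p ∈ Finset.univ.erase j, ∑ q ∈ (Finset.univ.erase j).erase p, ∑ l,
            (Wfun (b l) (ξ q + ξ p) + Wfun (b l) (ξ q - ξ p)) := by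
    rw [← Finset.add_sum_erase Finset.univ _ (Finset.mem_univ j)]
    have hrowj : ∑ q ∈ Finset.univ.erase j, ∑ l, (Wfun (b l) (u q + u j) + Wfun (b l) (u q - u j))
        = ∑ q ∈ Finset.univ.erase j, ∑ l, (Wfun (b l) (ξ q + t) + Wfun (b l) (ξ q - t)) := by
      apply Finset.sum_congr rfl
      intro q hq
      rw [huj, hup q (Finset.mem_erase.mp hq).1]
    rw [hrowj, Finset.sum_congr rfl h2, Finset.sum_add_distrib]
    ring
  show (∑ p, ((∑ k, Wfun (a k) (u p)) - 2*π*((n:ℝ)-p.val) * u p))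
      + (1/2) * ∑ p, ∑ q ∈ Finset.univ.erase p, ∑ l,
          (Wfun (b l) (u q + u p) + Wfun (b l) (u q - u p)) = _
  rw [h1, h3]
  ring

lemma hasDerivAt_Vfun_update (n K L : ℕ) (a : Fin K → ℝ) (b : Fin L → ℝ)
    (ha : ∀ k, 0 < a k) (hb : ∀ l, 0 < b l) (ξ : Fin n → ℝ) (j : Fin n) (t : ℝ) :
    HasDerivAt (fun s => Vfun n K L a b (Function.update ξ j s))
      ((∑ k, vRat (a k) t)
        + (∑ q ∈ Finset.univ.erase j, ∑ l, (vRat (b l) (ξ q + t) - vRat (b l) (ξ q - t)))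
        - 2 * π * ((n:ℝ) - j.val)) t := by
  have heq : (fun s => Vfun n K L a b (Function.update ξ j s))
      = fun s => ((∑ p ∈ Finset.univ.erase j, ((∑ k, Wfun (a k) (ξ p)) - 2 * π * ((n:ℝ) - p.val) * ξ p))
        + (1/2) * ∑ p ∈ Finset.univ.erase j, ∑ q ∈ (Finset.univ.erase j).erase p, ∑ l,
            (Wfun (b l) (ξ q + ξ p) + Wfun (b l) (ξ q - ξ p)))
      + ((∑ k, Wfun (a k) s) - 2 * π * ((n:ℝ) - j.val) * s
        + ∑ q ∈ Finset.univ.erase j, ∑ l, (Wfun (b l) (ξ q + s) + Wfun (b l) (ξ q - s))) :=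
    funext (Vfun_update n K L a b ξ j)
  rw [heq]
  have hql : ∀ (q : Fin n) (l : Fin L),
      HasDerivAt (fun s => Wfun (b l) (ξ q + s) + Wfun (b l) (ξ q - s))
        (vRat (b l) (ξ q + t) - vRat (b l) (ξ q - t)) t := by
    intro q l
    have hplus := (hasDerivAt_Wfun (hb l) (ξ q + t)).comp t ((hasDerivAt_id t).const_add (ξ q))
    have hminus := (hasDerivAt_Wfun (hb l) (ξ q - t)).comp t ((hasDerivAt_id t).const_sub (ξ q))
    refine (hplus.fun_add hminus).congr_deriv ?_
    ring
  have h1 : HasDerivAt (fun s : ℝ => ∑ k, Wfun (a k) s) (∑ k, vRat (a k) t) t :=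
    HasDerivAt.fun_sum (fun k _ => hasDerivAt_Wfun (ha k) t)
  have h2 : HasDerivAt (fun s : ℝ => 2 * π * ((n:ℝ) - j.val) * s) (2 * π * ((n:ℝ) - j.val)) t := by
    simpa using (hasDerivAt_id t).const_mul (2 * π * ((n:ℝ) - j.val))
  have h3 : HasDerivAt (fun s => ∑ q ∈ Finset.univ.erase j, ∑ l,
      (Wfun (b l) (ξ q + s) + Wfun (b l) (ξ q - s)))
      (∑ q ∈ Finset.univ.erase j, ∑ l, (vRat (b l) (ξ q + t) - vRat (b l) (ξ q - t))) t :=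
    HasDerivAt.fun_sum (fun q _ => HasDerivAt.fun_sum (fun l _ => hql q l))
  have := (((h1.fun_sub h2).fun_add h3).const_add
    ((∑ p ∈ Finset.univ.erase j, ((∑ k, Wfun (a k) (ξ p)) - 2 * π * ((n:ℝ) - p.val) * ξ p))
        + (1/2) * ∑ p ∈ Finset.univ.erase j, ∑ q ∈ (Finset.univ.erase j).erase p, ∑ l,
            (Wfun (b l) (ξ q + ξ p) + Wfun (b l) (ξ q - ξ p))))
  refine this.congr_deriv ?_
  ring

lemma continuous_Vfun (n K L : ℕ) (a : Fin K → ℝ) (b : Fin L → ℝ)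
    (ha : ∀ k, 0 < a k) (hb : ∀ l, 0 < b l) :
    Continuous (Vfun n K L a b) := by
  apply Continuous.add
  · apply continuous_finset_sum
    intro j _
    apply Continuous.sub
    · apply continuous_finset_sum
      intro k _
      exact (continuous_Wfun (ha k)).comp (continuous_apply j)
    · exact continuous_const.mul (continuous_apply j)
  · apply Continuous.mul continuous_const
    apply continuous_finset_sum
    intro j _
    apply continuous_finset_sum
    intro q _
    apply continuous_finset_sum
    intro l _
    apply Continuous.add
    · exact (continuous_Wfun (hb l)).comp ((continuous_apply q).add (continuous_apply j))
    · exact (continuous_Wfun (hb l)).comp ((continuous_apply q).sub (continuous_apply j))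

noncomputable def piM (c : ℝ) : ℝ := π - 2 / c
noncomputable def Ec (c s : ℝ) : ℝ := 2 * s + 2 * s / c + 2 * s * Real.log c

lemma Wfun_lb' {a c : ℝ} (ha : 0 < a) (hc : 1 ≤ c) (x : ℝ) :
    piM c * |x| - Ec c a ≤ Wfun a x := by
  unfold piM Ec; exact Wfun_lb ha hc

lemma piM_nonneg {c : ℝ} (hc : 1 ≤ c) : 0 ≤ piM c := by
  unfold piM
  have h1 : 2 / c ≤ 2 := by
    rw [div_le_iff₀ (by linarith)]; nlinarith
  linarith [Real.pi_gt_three]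

lemma Wfun_pair_lb {bl c : ℝ} (hb : 0 < bl) (hc : 1 ≤ c) (u w mv : ℝ)
    (hmv : 2 * mv ≤ |u| + |w|) :
    2 * piM c * mv - 2 * Ec c bl ≤ Wfun bl u + Wfun bl w := by
  have h1 := Wfun_lb' hb hc u
  have h2 := Wfun_lb' hb hc w
  have hprod := mul_nonneg (piM_nonneg hc) (show 0 ≤ |u| + |w| - 2 * mv by linarith)
  nlinarith [h1, h2, hprod]

lemma coef_ineq (n K L : ℕ) (hK : 3 ≤ K) (hL : 1 ≤ L) (m : ℝ) (hm1 : 1 ≤ m) (hm2 : m ≤ n) :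
    π / 2 ≤ (K:ℝ) * piM (8*n+8) - 2 * π * m + 2 * L * piM (8*n+8) * (m - 1) := by
  have hn1 : (1:ℝ) ≤ n := le_trans hm1 hm2
  have hden : (0:ℝ) < 8*(n:ℝ)+8 := by linarith
  have ht0 : (0:ℝ) < 2/(8*(n:ℝ)+8) := by positivity
  have ht1 : 2/(8*(n:ℝ)+8) * (2*m+1) ≤ 1 := by
    rw [div_mul_eq_mul_div, div_le_one hden]
    nlinarith
  have hπ := Real.pi_gt_three
  have hπm : piM (8*(n:ℝ)+8) = π - 2/(8*(n:ℝ)+8) := rfl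
  have hπm0 : 0 ≤ piM (8*(n:ℝ)+8) := piM_nonneg (by linarith)
  have hK3 : (3:ℝ) ≤ K := by exact_mod_cast hK
  have hL1 : (1:ℝ) ≤ L := by exact_mod_cast hL
  have h1 : 0 ≤ ((K:ℝ) - 3) * piM (8*(n:ℝ)+8) := mul_nonneg (by linarith) hπm0
  have h2 : 0 ≤ ((L:ℝ) - 1) * (piM (8*(n:ℝ)+8) * (m-1)) :=
    mul_nonneg (by linarith) (mul_nonneg hπm0 (by linarith))
  have h3 : 0 ≤ 2 * (2/(8*(n:ℝ)+8)) * m := by positivity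
  rw [hπm] at h1 h2 ⊢
  nlinarith [h1, h2, h3, ht1]

lemma cast_n_sub_one_sub (n : ℕ) (p : Fin n) :
    ((n - 1 - p.val : ℕ) : ℝ) = (n:ℝ) - 1 - p.val := by
  have h1 : p.val ≤ n - 1 := by omega
  have h2 : 1 ≤ n := by omega
  rw [Nat.cast_sub h1, Nat.cast_sub h2]
  push_cast
  ring

lemma comb_sum (n : ℕ) (ξ : Fin n → ℝ) :
    ∑ p : Fin n, ∑ q ∈ Finset.univ.erase p, (if p < q then |ξ p| else |ξ q|)
      = ∑ p : Fin n, (2 * ((n:ℝ) - 1 - p.val)) * |ξ p| := by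
  classical
  have hsplit : ∀ p : Fin n, ∀ q ∈ Finset.univ.erase p,
      (if p < q then |ξ p| else |ξ q|)
        = (if p < q then |ξ p| else 0) + (if q < p then |ξ q| else 0) := by
    intro p q hq
    have hne : q ≠ p := (Finset.mem_erase.mp hq).1
    rcases lt_trichotomy p q with h | h | h
    · simp [h, not_lt_of_gt h]
    · exact absurd h.symm hne
    · simp [h, not_lt_of_gt h]
  have hfilter : ∀ p : Fin n, (Finset.univ.erase p).filter (fun q => p < q) = Finset.Ioi p := by
    intro p
    ext q
    simp only [Finset.mem_filter, Finset.mem_erase, Finset.mem_univ, Finset.mem_Ioi, true_and,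
      and_true]
    constructor
    · rintro ⟨_, h⟩; exact h
    · intro h; exact ⟨ne_of_gt h, h⟩
  have hone : ∀ p : Fin n, ∑ q ∈ Finset.univ.erase p, (if p < q then |ξ p| else 0)
      = ((n:ℝ) - 1 - p.val) * |ξ p| := by
    intro p
    rw [← Finset.sum_filter, hfilter, Finset.sum_const, Fin.card_Ioi, nsmul_eq_mul,
      cast_n_sub_one_sub]
  have hswap : ∑ p : Fin n, ∑ q ∈ Finset.univ.erase p, (if q < p then |ξ q| else 0)
      = ∑ q : Fin n, ∑ p ∈ Finset.univ.erase q, (if q < p then |ξ q| else 0) := by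
    apply Finset.sum_comm'
    intro x y
    simp only [Finset.mem_univ, Finset.mem_erase, true_and, and_true]
    exact ⟨fun h => Ne.symm h, fun h => Ne.symm h⟩
  calc ∑ p : Fin n, ∑ q ∈ Finset.univ.erase p, (if p < q then |ξ p| else |ξ q|)
      = ∑ p : Fin n, ∑ q ∈ Finset.univ.erase p,
          ((if p < q then |ξ p| else 0) + (if q < p then |ξ q| else 0)) := by
        apply Finset.sum_congr rfl
        intro p _
        exact Finset.sum_congr rfl (hsplit p)
    _ = ∑ p : Fin n, (∑ q ∈ Finset.univ.erase p, (if p < q then |ξ p| else 0))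
          + ∑ p : Fin n, (∑ q ∈ Finset.univ.erase p, (if q < p then |ξ q| else 0)) := by
        rw [← Finset.sum_add_distrib]
        apply Finset.sum_congr rfl
        intro p _
        rw [Finset.sum_add_distrib]
    _ = ∑ p : Fin n, ((n:ℝ) - 1 - p.val) * |ξ p|
          + ∑ q : Fin n, ((n:ℝ) - 1 - q.val) * |ξ q| := by
        rw [hswap]
        congr 1
        · exact Finset.sum_congr rfl (fun p _ => hone p)
        · exact Finset.sum_congr rfl (fun q _ => hone q)
    _ = ∑ p : Fin n, (2 * ((n:ℝ) - 1 - p.val)) * |ξ p| := by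
        rw [← Finset.sum_add_distrib]
        apply Finset.sum_congr rfl
        intro p _
        ring

lemma Vfun_coercive (n K L : ℕ) (hn : 1 ≤ n) (hK : 3 ≤ K) (hL : 1 ≤ L)
    (a : Fin K → ℝ) (b : Fin L → ℝ) (ha : ∀ k, 0 < a k) (hb : ∀ l, 0 < b l) :
    ∃ C : ℝ, ∀ ξ : Fin n → ℝ, (π/2) * (∑ j, |ξ j|) - C ≤ Vfun n K L a b ξ := by
  classical
  have hn1 : (1:ℝ) ≤ n := by exact_mod_cast hn
  have hc1 : (1:ℝ) ≤ 8*(n:ℝ)+8 := by linarith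
  refine ⟨(∑ _j : Fin n, ∑ k, Ec (8*(n:ℝ)+8) (a k))
    + (1/2) * ∑ _p : Fin n, ∑ _q ∈ Finset.univ.erase _p, ∑ l, (2 * Ec (8*(n:ℝ)+8) (b l)), ?_⟩
  intro ξ
  have hS1 : ∑ j, ((K:ℝ) * piM (8*(n:ℝ)+8) * |ξ j| - 2 * π * ((n:ℝ) - j.val) * |ξ j|
        - ∑ k, Ec (8*(n:ℝ)+8) (a k))
      ≤ ∑ j, ((∑ k, Wfun (a k) (ξ j)) - 2 * π * ((n:ℝ) - j.val) * ξ j) := by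
    apply Finset.sum_le_sum
    intro j _
    have hW : ∑ k, (piM (8*(n:ℝ)+8) * |ξ j| - Ec (8*(n:ℝ)+8) (a k)) ≤ ∑ k, Wfun (a k) (ξ j) :=
      Finset.sum_le_sum (fun k _ => Wfun_lb' (ha k) hc1 (ξ j))
    have hWsum : ∑ k, (piM (8*(n:ℝ)+8) * |ξ j| - Ec (8*(n:ℝ)+8) (a k))
        = (K:ℝ) * piM (8*(n:ℝ)+8) * |ξ j| - ∑ k, Ec (8*(n:ℝ)+8) (a k) := by
      rw [Finset.sum_sub_distrib, Finset.sum_const, Finset.card_univ, Fintype.card_fin,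
        nsmul_eq_mul]
      ring
    have hlin : 2 * π * ((n:ℝ) - j.val) * ξ j ≤ 2 * π * ((n:ℝ) - j.val) * |ξ j| := by
      have hj : (j.val : ℝ) + 1 ≤ n := by exact_mod_cast j.isLt
      have hcoef : 0 ≤ 2 * π * ((n:ℝ) - j.val) := by
        have := Real.pi_pos
        nlinarith
      exact mul_le_mul_of_nonneg_left (le_abs_self _) hcoef
    rw [hWsum] at hW
    linarith
  have hS2 : ∑ p : Fin n, ∑ q ∈ Finset.univ.erase p,
        (2 * piM (8*(n:ℝ)+8) * (L:ℝ) * (if p < q then |ξ p| else |ξ q|)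
          - ∑ l, 2 * Ec (8*(n:ℝ)+8) (b l))
      ≤ ∑ p : Fin n, ∑ q ∈ Finset.univ.erase p, ∑ l,
        (Wfun (b l) (ξ q + ξ p) + Wfun (b l) (ξ q - ξ p)) := by
    apply Finset.sum_le_sum
    intro p _
    apply Finset.sum_le_sum
    intro q _
    have habs1 : 2 * |ξ p| ≤ |ξ q + ξ p| + |ξ q - ξ p| := by
      calc 2 * |ξ p| = |(ξ q + ξ p) - (ξ q - ξ p)| := by
            rw [show (ξ q + ξ p) - (ξ q - ξ p) = 2 * ξ p by ring, abs_mul]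
            simp
      _ ≤ |ξ q + ξ p| + |ξ q - ξ p| := abs_sub _ _
    have habs2 : 2 * |ξ q| ≤ |ξ q + ξ p| + |ξ q - ξ p| := by
      calc 2 * |ξ q| = |(ξ q + ξ p) + (ξ q - ξ p)| := by
            rw [show (ξ q + ξ p) + (ξ q - ξ p) = 2 * ξ q by ring, abs_mul]
            simp
      _ ≤ |ξ q + ξ p| + |ξ q - ξ p| := abs_add_le _ _
    have hmax : 2 * (if p < q then |ξ p| else |ξ q|) ≤ |ξ q + ξ p| + |ξ q - ξ p| := by
      split
      · exact habs1
      · exact habs2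
    have hpq : ∀ l : Fin L,
        2 * piM (8*(n:ℝ)+8) * (if p < q then |ξ p| else |ξ q|) - 2 * Ec (8*(n:ℝ)+8) (b l)
          ≤ Wfun (b l) (ξ q + ξ p) + Wfun (b l) (ξ q - ξ p) :=
      fun l => Wfun_pair_lb (hb l) hc1 _ _ _ hmax
    calc 2 * piM (8*(n:ℝ)+8) * (L:ℝ) * (if p < q then |ξ p| else |ξ q|)
          - ∑ l, 2 * Ec (8*(n:ℝ)+8) (b l)
        = ∑ l : Fin L, (2 * piM (8*(n:ℝ)+8) * (if p < q then |ξ p| else |ξ q|)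
            - 2 * Ec (8*(n:ℝ)+8) (b l)) := by
          rw [Finset.sum_sub_distrib, Finset.sum_const, Finset.card_univ, Fintype.card_fin,
            nsmul_eq_mul]
          ring
      _ ≤ ∑ l, (Wfun (b l) (ξ q + ξ p) + Wfun (b l) (ξ q - ξ p)) :=
          Finset.sum_le_sum (fun l _ => hpq l)
  have hcoef : ∀ j : Fin n, π / 2 * |ξ j|
      ≤ ((K:ℝ) * piM (8*(n:ℝ)+8) - 2 * π * ((n:ℝ) - j.val)
          + 2 * L * piM (8*(n:ℝ)+8) * (((n:ℝ) - j.val) - 1)) * |ξ j| := by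
    intro j
    apply mul_le_mul_of_nonneg_right _ (abs_nonneg _)
    have hj : (j.val : ℝ) + 1 ≤ n := by exact_mod_cast j.isLt
    have hj0 : (0:ℝ) ≤ j.val := by positivity
    exact coef_ineq n K L hK hL ((n:ℝ) - j.val) (by linarith) (by linarith)
  have hfinal : ∑ j, (π / 2 * |ξ j|)
      ≤ ∑ j, (((K:ℝ) * piM (8*(n:ℝ)+8) - 2 * π * ((n:ℝ) - j.val)
          + 2 * L * piM (8*(n:ℝ)+8) * (((n:ℝ) - j.val) - 1)) * |ξ j|) :=
    Finset.sum_le_sum (fun j _ => hcoef j)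
  have hcomb := comb_sum n ξ
  unfold Vfun
  have expand1 : ∑ j, ((K:ℝ) * piM (8*(n:ℝ)+8) * |ξ j| - 2 * π * ((n:ℝ) - j.val) * |ξ j|
        - ∑ k, Ec (8*(n:ℝ)+8) (a k))
      = ∑ j, ((K:ℝ) * piM (8*(n:ℝ)+8) * |ξ j| - 2 * π * ((n:ℝ) - j.val) * |ξ j|)
        - ∑ _j : Fin n, ∑ k, Ec (8*(n:ℝ)+8) (a k) := by
    rw [← Finset.sum_sub_distrib]
  have expand2 : ∑ p : Fin n, ∑ q ∈ Finset.univ.erase p,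
        (2 * piM (8*(n:ℝ)+8) * (L:ℝ) * (if p < q then |ξ p| else |ξ q|)
          - ∑ l, 2 * Ec (8*(n:ℝ)+8) (b l))
      = 2 * piM (8*(n:ℝ)+8) * (L:ℝ)
          * (∑ p : Fin n, (2 * ((n:ℝ) - 1 - p.val)) * |ξ p|)
        - ∑ _p : Fin n, ∑ _q ∈ Finset.univ.erase _p, ∑ l, 2 * Ec (8*(n:ℝ)+8) (b l) := by
    rw [← hcomb, Finset.mul_sum, ← Finset.sum_sub_distrib]
    apply Finset.sum_congr rfl
    intro p _
    rw [Finset.mul_sum, ← Finset.sum_sub_distrib]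
  have main : (π/2) * ∑ j, |ξ j|
      ≤ ∑ j, ((K:ℝ) * piM (8*(n:ℝ)+8) * |ξ j| - 2 * π * ((n:ℝ) - j.val) * |ξ j|)
        + (1/2) * (2 * piM (8*(n:ℝ)+8) * (L:ℝ)
            * (∑ p : Fin n, (2 * ((n:ℝ) - 1 - p.val)) * |ξ p|)) := by
    rw [Finset.mul_sum]
    calc ∑ j, (π/2) * |ξ j|
        ≤ ∑ j, (((K:ℝ) * piM (8*(n:ℝ)+8) - 2 * π * ((n:ℝ) - j.val)
            + 2 * L * piM (8*(n:ℝ)+8) * (((n:ℝ) - j.val) - 1)) * |ξ j|) := hfinal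
      _ = ∑ j, (((K:ℝ) * piM (8*(n:ℝ)+8) * |ξ j| - 2 * π * ((n:ℝ) - j.val) * |ξ j|)
            + (1/2) * (2 * piM (8*(n:ℝ)+8) * (L:ℝ) * (2 * ((n:ℝ) - 1 - j.val) * |ξ j|))) := by
          apply Finset.sum_congr rfl
          intro j _
          ring
      _ = ∑ j, ((K:ℝ) * piM (8*(n:ℝ)+8) * |ξ j| - 2 * π * ((n:ℝ) - j.val) * |ξ j|)
            + (1/2) * (2 * piM (8*(n:ℝ)+8) * (L:ℝ)
              * (∑ p : Fin n, (2 * ((n:ℝ) - 1 - p.val)) * |ξ p|)) := by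
          rw [Finset.sum_add_distrib]
          congr 1
          rw [Finset.mul_sum, Finset.mul_sum]
  rw [expand1] at hS1
  rw [expand2] at hS2
  linarith [hS1, hS2, main]

/-- The rational type B Bethe critical-point system at `α = 0`, `ε = 0`, `μ = ρ`. -/
def ratBSys (n K L : ℕ) (a : Fin K → ℝ) (b : Fin L → ℝ) (ξ : Fin n → ℝ) : Prop :=
  ∀ j : Fin n,
    (∑ k, vRat (a k) (ξ j)) +
    (∑ j' ∈ Finset.univ.erase j, ∑ l,
      (vRat (b l) (ξ j' + ξ j) - vRat (b l) (ξ j' - ξ j)))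
    = 2 * π * ((n : ℝ) - j.val)

lemma exists_sol (n K L : ℕ) (hn : 1 ≤ n) (hK : 3 ≤ K) (hL : 1 ≤ L)
    (a : Fin K → ℝ) (b : Fin L → ℝ) (ha : ∀ k, 0 < a k) (hb : ∀ l, 0 < b l) :
    ∃ ξ : Fin n → ℝ, ratBSys n K L a b ξ := by
  classical
  obtain ⟨C, hC⟩ := Vfun_coercive n K L hn hK hL a b ha hb
  have hcont := continuous_Vfun n K L a b ha hb
  set V := Vfun n K L a b with hV
  set R : ℝ := max 1 ((2/π) * (V 0 + C) + 1) with hR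
  have hπ := Real.pi_pos
  have hR1 : (1:ℝ) ≤ R := le_max_left _ _
  have hR0 : (0:ℝ) ≤ R := by linarith
  have hball : IsCompact (Metric.closedBall (0 : Fin n → ℝ) R) := isCompact_closedBall _ _
  have hne : (Metric.closedBall (0 : Fin n → ℝ) R).Nonempty :=
    ⟨0, Metric.mem_closedBall_self hR0⟩
  obtain ⟨ξ0, hξ0mem, hmin⟩ := hball.exists_isMinOn hne hcont.continuousOn
  have hglobal : ∀ ξ, V ξ0 ≤ V ξ := by
    intro ξ
    by_cases hmem : ξ ∈ Metric.closedBall (0 : Fin n → ℝ) R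
    · exact hmin hmem
    · have hnorm : R < ‖ξ‖ := by
        simp only [Metric.mem_closedBall, dist_zero_right, not_le] at hmem
        exact hmem
      have hsum : ‖ξ‖ ≤ ∑ j, |ξ j| := by
        have h0 : (0:ℝ) ≤ ∑ j, |ξ j| := Finset.sum_nonneg fun j _ => abs_nonneg _
        rw [pi_norm_le_iff_of_nonneg h0]
        intro i
        rw [Real.norm_eq_abs]
        exact Finset.single_le_sum (fun j _ => abs_nonneg (ξ j)) (Finset.mem_univ i)
      have hVξ := hC ξ
      have h1 : (π/2) * ‖ξ‖ ≤ (π/2) * ∑ j, |ξ j| :=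
        mul_le_mul_of_nonneg_left hsum (by positivity)
      have h2 : (π/2) * R < (π/2) * ‖ξ‖ := by
        apply mul_lt_mul_of_pos_left hnorm (by positivity)
      have h3 : (2/π) * (V 0 + C) + 1 ≤ R := le_max_right _ _
      have h4 : (π/2) * ((2/π) * (V 0 + C) + 1) = V 0 + C + π/2 := by
        field_simp
      have h5 : V 0 + C + π/2 ≤ (π/2) * R := by
        rw [← h4]
        exact mul_le_mul_of_nonneg_left h3 (by positivity)
      have h6 : V ξ0 ≤ V 0 := hmin (Metric.mem_closedBall_self hR0)
      linarith
  refine ⟨ξ0, ?_⟩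
  intro j
  have hloc : IsLocalMin (fun s => V (Function.update ξ0 j s)) (ξ0 j) := by
    have : ∀ s, (fun s => V (Function.update ξ0 j s)) (ξ0 j) ≤ V (Function.update ξ0 j s) := by
      intro s
      simp only [Function.update_eq_self]
      exact hglobal _
    exact Filter.Eventually.of_forall this
  have hderiv := hasDerivAt_Vfun_update n K L a b ha hb ξ0 j (ξ0 j)
  have hzero := hloc.hasDerivAt_eq_zero hderiv
  linarith [hzero]

lemma pair_l_nonneg {bl : ℝ} (hb : 0 < bl) (xq xj yq yj : ℝ) :
    0 ≤ ((vRat bl (xq+xj) - vRat bl (xq-xj)) - (vRat bl (yq+yj) - vRat bl (yq-yj))) * (xj - yj)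
      + ((vRat bl (xj+xq) - vRat bl (xj-xq)) - (vRat bl (yj+yq) - vRat bl (yj-yq))) * (xq - yq) := by
  have o1 : vRat bl (xj - xq) = - vRat bl (xq - xj) := by
    rw [show xj - xq = -(xq - xj) by ring, vRat_neg]
  have o2 : vRat bl (yj - yq) = - vRat bl (yq - yj) := by
    rw [show yj - yq = -(yq - yj) by ring, vRat_neg]
  have c1 : xj + xq = xq + xj := add_comm _ _
  have c2 : yj + yq = yq + yj := add_comm _ _
  rw [o1, o2, c1, c2]
  have h1 := vRat_mul_nonneg hb (xq+xj) (yq+yj)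
  have h2 := vRat_mul_nonneg hb (xq-xj) (yq-yj)
  nlinarith [h1, h2]

lemma uniq_sol (n K L : ℕ) (hK : 3 ≤ K)
    (a : Fin K → ℝ) (b : Fin L → ℝ) (ha : ∀ k, 0 < a k) (hb : ∀ l, 0 < b l)
    (ξ η : Fin n → ℝ) (hξ : ratBSys n K L a b ξ) (hη : ratBSys n K L a b η) : ξ = η := by
  classical
  -- difference of the two systems
  have hdiff : ∀ j : Fin n,
      (∑ k, (vRat (a k) (ξ j) - vRat (a k) (η j)))
      + (∑ q ∈ Finset.univ.erase j, ∑ l,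
          ((vRat (b l) (ξ q + ξ j) - vRat (b l) (ξ q - ξ j))
            - (vRat (b l) (η q + η j) - vRat (b l) (η q - η j)))) = 0 := by
    intro j
    have h1 := hξ j
    have h2 := hη j
    have e1 : ∑ k, (vRat (a k) (ξ j) - vRat (a k) (η j))
        = (∑ k, vRat (a k) (ξ j)) - ∑ k, vRat (a k) (η j) := Finset.sum_sub_distrib _ _
    have e2 : ∑ q ∈ Finset.univ.erase j, ∑ l,
          ((vRat (b l) (ξ q + ξ j) - vRat (b l) (ξ q - ξ j))
            - (vRat (b l) (η q + η j) - vRat (b l) (η q - η j)))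
        = (∑ q ∈ Finset.univ.erase j, ∑ l,
            (vRat (b l) (ξ q + ξ j) - vRat (b l) (ξ q - ξ j)))
          - ∑ q ∈ Finset.univ.erase j, ∑ l,
            (vRat (b l) (η q + η j) - vRat (b l) (η q - η j)) := by
      rw [← Finset.sum_sub_distrib]
      exact Finset.sum_congr rfl (fun q _ => Finset.sum_sub_distrib _ _)
    rw [e1, e2]
    linarith
  set P := ∑ j, (∑ k, (vRat (a k) (ξ j) - vRat (a k) (η j))) * (ξ j - η j) with hP
  set Q := ∑ j, (∑ q ∈ Finset.univ.erase j, ∑ l,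
      ((vRat (b l) (ξ q + ξ j) - vRat (b l) (ξ q - ξ j))
        - (vRat (b l) (η q + η j) - vRat (b l) (η q - η j)))) * (ξ j - η j) with hQ
  have hPQ : P + Q = 0 := by
    rw [hP, hQ, ← Finset.sum_add_distrib]
    apply Finset.sum_eq_zero
    intro j _
    linear_combination (ξ j - η j) * (hdiff j)
  -- Q ≥ 0 via symmetrization
  set G : Fin n → Fin n → ℝ := fun j q =>
    (∑ l, ((vRat (b l) (ξ q + ξ j) - vRat (b l) (ξ q - ξ j))
      - (vRat (b l) (η q + η j) - vRat (b l) (η q - η j)))) * (ξ j - η j) with hG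
  have hQG : Q = ∑ j, ∑ q ∈ Finset.univ.erase j, G j q := by
    rw [hQ]
    apply Finset.sum_congr rfl
    intro j _
    rw [hG, Finset.sum_mul]
  have hswap : ∑ j, ∑ q ∈ Finset.univ.erase j, G j q
      = ∑ j, ∑ q ∈ Finset.univ.erase j, G q j := by
    apply Finset.sum_comm'
    intro x y
    simp only [Finset.mem_univ, Finset.mem_erase, true_and, and_true]
    exact ⟨fun h => Ne.symm h, fun h => Ne.symm h⟩
  have hpair : ∀ j : Fin n, ∀ q ∈ Finset.univ.erase j, 0 ≤ G j q + G q j := by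
    intro j q _
    simp only [hG]
    rw [Finset.sum_mul, Finset.sum_mul, ← Finset.sum_add_distrib]
    apply Finset.sum_nonneg
    intro l _
    exact pair_l_nonneg (hb l) (ξ q) (ξ j) (η q) (η j)
  have hQ0 : 0 ≤ Q := by
    have h2Q : (∑ j, ∑ q ∈ Finset.univ.erase j, G j q)
          + (∑ j, ∑ q ∈ Finset.univ.erase j, G q j)
        = ∑ j, ∑ q ∈ Finset.univ.erase j, (G j q + G q j) := by
      rw [← Finset.sum_add_distrib]
      apply Finset.sum_congr rfl
      intro j _
      rw [← Finset.sum_add_distrib]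
    have hQQ : 0 ≤ (∑ j, ∑ q ∈ Finset.univ.erase j, G j q)
        + (∑ j, ∑ q ∈ Finset.univ.erase j, G q j) := by
      rw [h2Q]
      apply Finset.sum_nonneg
      intro j _
      exact Finset.sum_nonneg (hpair j)
    rw [← hswap] at hQQ
    rw [hQG]
    linarith
  -- P ≥ 0 termwise
  have hPterm : ∀ j : Fin n, 0 ≤ (∑ k, (vRat (a k) (ξ j) - vRat (a k) (η j))) * (ξ j - η j) := by
    intro j
    rw [Finset.sum_mul]
    apply Finset.sum_nonneg
    intro k _
    exact vRat_mul_nonneg (ha k) (ξ j) (η j)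
  have hP0 : 0 ≤ P := Finset.sum_nonneg (fun j _ => hPterm j)
  have hPz : P = 0 := by linarith
  have hPall := (Finset.sum_eq_zero_iff_of_nonneg (fun j _ => hPterm j)).mp hPz
  funext j
  by_contra hne
  have hjz := hPall j (Finset.mem_univ j)
  rw [Finset.sum_mul] at hjz
  have hterm : ∀ k : Fin K, 0 ≤ (vRat (a k) (ξ j) - vRat (a k) (η j)) * (ξ j - η j) :=
    fun k => vRat_mul_nonneg (ha k) (ξ j) (η j)
  have hallz := (Finset.sum_eq_zero_iff_of_nonneg (fun k _ => hterm k)).mp hjz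
  have := hallz ⟨0, by omega⟩ (Finset.mem_univ _)
  have hpos := vRat_mul_pos (ha ⟨0, by omega⟩) hne
  linarith

lemma vRat_nonpos {a : ℝ} (ha : 0 < a) {x : ℝ} (h : x ≤ 0) : vRat a x ≤ 0 := by
  have := vRat_mono ha h
  rwa [vRat_zero] at this

lemma kappa_pos (n K L : ℕ) (hn : 1 ≤ n) (hK : 3 ≤ K)
    (a : Fin K → ℝ) (b : Fin L → ℝ) (ha : ∀ k, 0 < a k) (hb : ∀ l, 0 < b l) :
    0 < (∑ k, (a k)⁻¹) + 2 * ((n : ℝ) - 1) * (∑ l, (b l)⁻¹) := by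
  have h1 : 0 < ∑ k, (a k)⁻¹ := by
    apply Finset.sum_pos (fun k _ => inv_pos.mpr (ha k))
    exact ⟨⟨0, by omega⟩, Finset.mem_univ _⟩
  have h2 : 0 ≤ ∑ l, (b l)⁻¹ := Finset.sum_nonneg (fun l _ => (inv_pos.mpr (hb l)).le)
  have hn1 : (1:ℝ) ≤ n := by exact_mod_cast hn
  nlinarith

lemma bound_one (n K L : ℕ) (hn : 1 ≤ n) (hK : 3 ≤ K) (hL : 1 ≤ L)
    (a : Fin K → ℝ) (b : Fin L → ℝ) (ha : ∀ k, 0 < a k) (hb : ∀ l, 0 < b l)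
    (κ : ℝ) (hκ : κ = (∑ k, (a k)⁻¹) + 2 * ((n : ℝ) - 1) * (∑ l, (b l)⁻¹))
    (ξ : Fin n → ℝ) (hξ : ratBSys n K L a b ξ) (j : Fin n) :
    π * ((n : ℝ) - j.val) / κ ≤ ξ j := by
  have hκ0 : 0 < κ := hκ ▸ kappa_pos n K L hn hK a b ha hb
  have hπ := Real.pi_pos
  have heq := hξ j
  have hjn : (j.val : ℝ) + 1 ≤ n := by exact_mod_cast j.isLt
  have hrhs : 2 * π ≤ 2 * π * ((n:ℝ) - j.val) := by nlinarith
  -- ξ j is nonnegative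
  have hpos : 0 ≤ ξ j := by
    by_contra hneg
    push_neg at hneg
    have hA : ∑ k, vRat (a k) (ξ j) ≤ 0 :=
      Finset.sum_nonpos (fun k _ => vRat_nonpos (ha k) hneg.le)
    have hB : ∑ q ∈ Finset.univ.erase j, ∑ l,
        (vRat (b l) (ξ q + ξ j) - vRat (b l) (ξ q - ξ j)) ≤ 0 := by
      apply Finset.sum_nonpos
      intro q _
      apply Finset.sum_nonpos
      intro l _
      have := vRat_mono (hb l) (show ξ q + ξ j ≤ ξ q - ξ j by linarith)
      linarith
    linarith
  -- upper bound on the left side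
  have hA : ∑ k, vRat (a k) (ξ j) ≤ (∑ k, 2 * (a k)⁻¹) * ξ j := by
    rw [Finset.sum_mul]
    apply Finset.sum_le_sum
    intro k _
    have := vRat_lip (ha k) (show (0:ℝ) ≤ ξ j from hpos)
    rw [vRat_zero] at this
    have h2a : 2 / a k = 2 * (a k)⁻¹ := by rw [div_eq_mul_inv]
    rw [h2a] at this
    linarith
  have hB : ∑ q ∈ Finset.univ.erase j, ∑ l,
      (vRat (b l) (ξ q + ξ j) - vRat (b l) (ξ q - ξ j))
      ≤ ∑ q ∈ Finset.univ.erase j, ((∑ l, 4 * (b l)⁻¹) * ξ j) := by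
    apply Finset.sum_le_sum
    intro q _
    rw [Finset.sum_mul]
    apply Finset.sum_le_sum
    intro l _
    have := vRat_lip (hb l) (show ξ q - ξ j ≤ ξ q + ξ j by linarith)
    have h2b : 2 / b l = 2 * (b l)⁻¹ := by rw [div_eq_mul_inv]
    rw [h2b] at this
    nlinarith
  have hcard : ((Finset.univ.erase j).card : ℝ) = (n:ℝ) - 1 := by
    rw [Finset.card_erase_of_mem (Finset.mem_univ j), Finset.card_univ, Fintype.card_fin]
    rw [Nat.cast_sub hn]
    norm_num
  have hBsum : ∑ q ∈ Finset.univ.erase j, ((∑ l, 4 * (b l)⁻¹) * ξ j)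
      = ((n:ℝ) - 1) * ((∑ l, 4 * (b l)⁻¹) * ξ j) := by
    rw [Finset.sum_const, nsmul_eq_mul, hcard]
  have hsum4 : ∑ l, 4 * (b l)⁻¹ = 4 * ∑ l, (b l)⁻¹ := by
    rw [Finset.mul_sum]
  have hsum2 : ∑ k, 2 * (a k)⁻¹ = 2 * ∑ k, (a k)⁻¹ := by
    rw [Finset.mul_sum]
  have htot : 2 * π * ((n:ℝ) - j.val) ≤ 2 * κ * ξ j := by
    rw [hκ]
    rw [hBsum, hsum4] at hB
    rw [hsum2] at hA
    nlinarith [hA, hB, heq]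
  rw [div_le_iff₀ hκ0]
  nlinarith [htot]

set_option maxHeartbeats 1000000 in
lemma bound_two (n K L : ℕ) (hn : 1 ≤ n) (hK : 3 ≤ K) (hL : 1 ≤ L)
    (a : Fin K → ℝ) (b : Fin L → ℝ) (ha : ∀ k, 0 < a k) (hb : ∀ l, 0 < b l)
    (κ : ℝ) (hκ : κ = (∑ k, (a k)⁻¹) + 2 * ((n : ℝ) - 1) * (∑ l, (b l)⁻¹))
    (ξ : Fin n → ℝ) (hξ : ratBSys n K L a b ξ) (j j' : Fin n) (hjj : j < j') :
    π * ((j'.val : ℝ) - j.val) / κ ≤ ξ j - ξ j' := by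
  classical
  have hκ0 : 0 < κ := hκ ▸ kappa_pos n K L hn hK a b ha hb
  have hπ := Real.pi_pos
  have hvlt : j.val < j'.val := hjj
  have hΔ : (1:ℝ) ≤ (j'.val : ℝ) - j.val := by
    have : j.val + 1 ≤ j'.val := hvlt
    have := (Nat.cast_le (α := ℝ)).mpr this
    push_cast at this
    linarith
  have hne : j' ≠ j := Fin.ne_of_gt hjj
  have hmem : j' ∈ Finset.univ.erase j := Finset.mem_erase.mpr ⟨hne, Finset.mem_univ _⟩
  have hmem' : j ∈ Finset.univ.erase j' := Finset.mem_erase.mpr ⟨hne.symm, Finset.mem_univ _⟩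
  set g : Fin n → ℝ := fun q => ∑ l, (vRat (b l) (ξ q + ξ j) - vRat (b l) (ξ q - ξ j)) with hg
  set h : Fin n → ℝ := fun q => ∑ l, (vRat (b l) (ξ q + ξ j') - vRat (b l) (ξ q - ξ j')) with hh
  set S := (Finset.univ.erase j).erase j' with hS
  have hsplit1 : ∑ q ∈ Finset.univ.erase j, g q = g j' + ∑ q ∈ S, g q :=
    (Finset.add_sum_erase _ g hmem).symm
  have hsplit2 : ∑ q ∈ Finset.univ.erase j', h q = h j + ∑ q ∈ S, h q := by
    rw [hS, Finset.erase_right_comm]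
    exact (Finset.add_sum_erase _ h hmem').symm
  have heqj := hξ j
  have heqj' := hξ j'
  have hkey : (∑ k, (vRat (a k) (ξ j) - vRat (a k) (ξ j')))
      + (g j' - h j) + (∑ q ∈ S, (g q - h q))
      = 2 * π * ((j'.val : ℝ) - j.val) := by
    have e1 : ∑ k, (vRat (a k) (ξ j) - vRat (a k) (ξ j'))
        = (∑ k, vRat (a k) (ξ j)) - ∑ k, vRat (a k) (ξ j') := Finset.sum_sub_distrib _ _
    have e2 : ∑ q ∈ S, (g q - h q) = (∑ q ∈ S, g q) - ∑ q ∈ S, h q := Finset.sum_sub_distrib _ _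
    rw [e1, e2]
    have hgj : ∑ q ∈ Finset.univ.erase j, g q
        = ∑ j'' ∈ Finset.univ.erase j, ∑ l,
            (vRat (b l) (ξ j'' + ξ j) - vRat (b l) (ξ j'' - ξ j)) := rfl
    have hhj : ∑ q ∈ Finset.univ.erase j', h q
        = ∑ j'' ∈ Finset.univ.erase j', ∑ l,
            (vRat (b l) (ξ j'' + ξ j') - vRat (b l) (ξ j'' - ξ j')) := rfl
    have h1 : (∑ k, vRat (a k) (ξ j)) + (g j' + ∑ q ∈ S, g q) = 2 * π * ((n : ℝ) - j.val) := by
      rw [← hsplit1]; exact heqj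
    have h2 : (∑ k, vRat (a k) (ξ j')) + (h j + ∑ q ∈ S, h q) = 2 * π * ((n : ℝ) - j'.val) := by
      rw [← hsplit2]; exact heqj'
    have : 2 * π * ((n : ℝ) - j.val) - 2 * π * ((n : ℝ) - j'.val)
        = 2 * π * ((j'.val : ℝ) - j.val) := by ring
    linarith
  -- d ≥ 0
  set d := ξ j - ξ j' with hd
  have hd0 : 0 ≤ d := by
    by_contra hneg
    push_neg at hneg
    have hA : ∑ k, (vRat (a k) (ξ j) - vRat (a k) (ξ j')) ≤ 0 := by
      apply Finset.sum_nonpos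
      intro k _
      have := vRat_mono (ha k) (show ξ j ≤ ξ j' by rw [hd] at hneg; linarith)
      linarith
    have hB : g j' - h j ≤ 0 := by
      simp only [hg, hh]
      rw [← Finset.sum_sub_distrib]
      apply Finset.sum_nonpos
      intro l _
      have hcomm : ξ j + ξ j' = ξ j' + ξ j := add_comm _ _
      rw [hcomm]
      have := vRat_mono (hb l) (show ξ j - ξ j' ≤ ξ j' - ξ j by rw [hd] at hneg; linarith)
      linarith
    have hC : ∑ q ∈ S, (g q - h q) ≤ 0 := by
      apply Finset.sum_nonpos
      intro q _
      simp only [hg, hh]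
      rw [← Finset.sum_sub_distrib]
      apply Finset.sum_nonpos
      intro l _
      have h1 := vRat_mono (hb l) (show ξ q + ξ j ≤ ξ q + ξ j' by rw [hd] at hneg; linarith)
      have h2 := vRat_mono (hb l) (show ξ q - ξ j' ≤ ξ q - ξ j by rw [hd] at hneg; linarith)
      linarith
    nlinarith [hkey, hΔ, hπ]
  -- upper bounds
  have hA : ∑ k, (vRat (a k) (ξ j) - vRat (a k) (ξ j')) ≤ (∑ k, 2 * (a k)⁻¹) * d := by
    rw [Finset.sum_mul]
    apply Finset.sum_le_sum
    intro k _
    have := vRat_lip (ha k) (show ξ j' ≤ ξ j by rw [hd] at hd0; linarith)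
    have h2a : 2 / a k = 2 * (a k)⁻¹ := by rw [div_eq_mul_inv]
    rw [h2a] at this
    rw [hd]
    linarith
  have hB : g j' - h j ≤ (∑ l, 4 * (b l)⁻¹) * d := by
    simp only [hg, hh]
    rw [← Finset.sum_sub_distrib, Finset.sum_mul]
    apply Finset.sum_le_sum
    intro l _
    have hcomm : ξ j + ξ j' = ξ j' + ξ j := add_comm _ _
    rw [hcomm]
    have := vRat_lip (hb l) (show ξ j' - ξ j ≤ ξ j - ξ j' by rw [hd] at hd0; linarith)
    have h2b : 2 / b l = 2 * (b l)⁻¹ := by rw [div_eq_mul_inv]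
    rw [h2b] at this
    have hone : (ξ j - ξ j') - (ξ j' - ξ j) = 2 * d := by rw [hd]; ring
    rw [hone] at this
    have hbpos := inv_pos.mpr (hb l)
    nlinarith
  have hC : ∀ q ∈ S, g q - h q ≤ (∑ l, 4 * (b l)⁻¹) * d := by
    intro q _
    simp only [hg, hh]
    rw [← Finset.sum_sub_distrib, Finset.sum_mul]
    apply Finset.sum_le_sum
    intro l _
    have h1 := vRat_lip (hb l) (show ξ q + ξ j' ≤ ξ q + ξ j by rw [hd] at hd0; linarith)
    have h2 := vRat_lip (hb l) (show ξ q - ξ j ≤ ξ q - ξ j' by rw [hd] at hd0; linarith)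
    have h2b : 2 / b l = 2 * (b l)⁻¹ := by rw [div_eq_mul_inv]
    rw [h2b] at h1 h2
    have e1 : (ξ q + ξ j) - (ξ q + ξ j') = d := by rw [hd]; ring
    have e2 : (ξ q - ξ j') - (ξ q - ξ j) = d := by rw [hd]; ring
    rw [e1] at h1
    rw [e2] at h2
    linarith
  have hcardS : ((S.card : ℕ) : ℝ) = (n:ℝ) - 2 := by
    rw [hS, Finset.card_erase_of_mem hmem, Finset.card_erase_of_mem (Finset.mem_univ j),
      Finset.card_univ, Fintype.card_fin]
    have hn2 : 2 ≤ n := by omega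
    rw [Nat.cast_sub (by omega : 1 ≤ n - 1), Nat.cast_sub (by omega : 1 ≤ n)]
    push_cast
    ring
  have hCsum : ∑ q ∈ S, (g q - h q) ≤ ((n:ℝ) - 2) * ((∑ l, 4 * (b l)⁻¹) * d) := by
    calc ∑ q ∈ S, (g q - h q) ≤ ∑ _q ∈ S, ((∑ l, 4 * (b l)⁻¹) * d) := Finset.sum_le_sum hC
    _ = ((n:ℝ) - 2) * ((∑ l, 4 * (b l)⁻¹) * d) := by
        rw [Finset.sum_const, nsmul_eq_mul, hcardS]
  have hsum4 : ∑ l, 4 * (b l)⁻¹ = 4 * ∑ l, (b l)⁻¹ := by rw [Finset.mul_sum]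
  have hsum2 : ∑ k, 2 * (a k)⁻¹ = 2 * ∑ k, (a k)⁻¹ := by rw [Finset.mul_sum]
  have htot : 2 * π * ((j'.val : ℝ) - j.val) ≤ 2 * κ * d := by
    rw [hκ]
    rw [hsum2] at hA
    rw [hsum4] at hB hCsum
    nlinarith [hA, hB, hCsum, hkey]
  rw [div_le_iff₀ hκ0]
  rw [hd] at htot ⊢
  nlinarith [htot]

/-- Existence, uniqueness and lower bounds for the solution of the rational type B
Bethe system at `α = 0`. -/
theorem ratB_exists_unique_and_bounds
    (n K L : ℕ) (hn : 1 ≤ n) (hK : 3 ≤ K) (hL : 1 ≤ L)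
    (a : Fin K → ℝ) (b : Fin L → ℝ)
    (ha : ∀ k, 0 < a k) (hb : ∀ l, 0 < b l)
    (κ : ℝ)
    (hκ : κ = (∑ k, (a k)⁻¹) + 2 * ((n : ℝ) - 1) * (∑ l, (b l)⁻¹)) :
    (∃! ξ : Fin n → ℝ, ratBSys n K L a b ξ) ∧
    (∀ ξ : Fin n → ℝ, ratBSys n K L a b ξ →
      (∀ j : Fin n, π * ((n : ℝ) - j.val) / κ ≤ ξ j) ∧
      (∀ j j' : Fin n, j < j' →
        π * ((j'.val : ℝ) - j.val) / κ ≤ ξ j - ξ j')) := by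
  constructor
  · obtain ⟨ξ, hξ⟩ := exists_sol n K L hn hK hL a b ha hb
    exact ⟨ξ, hξ, fun η hη => uniq_sol n K L hK a b ha hb η ξ hη hξ⟩
  · intro ξ hξ
    refine ⟨fun j => bound_one n K L hn hK hL a b ha hb κ hκ ξ hξ j,
      fun j j' hjj => bound_two n K L hn hK hL a b ha hb κ hκ ξ hξ j j' hjj⟩
end
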